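/- Fix δ > 0. For each m let k = ⌊(m−1)/(2+δ)⌋. Then |V(LR^k(2^m))| / 2^m → 1 as m → ∞. -/

import Mathlib

/-- `a` and `b` are `L`-neighbors: `a < b` and `L ∩ {a, …, b} = {a, b}`. -/
def LNbr (L : Set ℕ) (a b : ℕ) : Prop := a < b ∧ L ∩ Set.Icc a b = {a, b}

/-- The layers of the layered ring graph `LR^k(2^m)`:
`L^1 = {0, 1, 2, 4, …, 2^(m-1), 2^m}` and
`L^(i+1) = {0} ∪ ⋃_{N^i(a,b)} {a + 2^t : 0 ≤ t ≤ log₂ (b - a)}`. -/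
def Lset (m : ℕ) : ℕ → Set ℕ
  | 0 => ∅
  | 1 => {0} ∪ {x | ∃ t ≤ m, x = 2 ^ t}
  | i + 2 => {0} ∪ {x | ∃ a b, LNbr (Lset m (i + 1)) a b ∧
      ∃ t ≤ Nat.log 2 (b - a), x = a + 2 ^ t}

/-- The vertices of `LR^k(2^m)`, encoded as pairs `(i, t)`: `(0, t)` is the backbone
vertex `b_t` (for `t ≤ 2^m`), and `(i, t)` with `1 ≤ i ≤ k` is the layer vertex `ℓ^i_t`
(for `t ∈ L^i`). The position of `(i, t)` is `t`. -/
def LRVertexSet (m k : ℕ) : Set (ℕ × ℕ) :=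
  {v | (v.1 = 0 ∧ v.2 ≤ 2 ^ m) ∨ (1 ≤ v.1 ∧ v.1 ≤ k ∧ v.2 ∈ Lset m v.1)}

/-- The layered ring graph `LR^k(2^m)`: two distinct vertices are adjacent iff their
positions differ by at most `1` modulo `2^m + 1`. -/
def LRGraph (m k : ℕ) : SimpleGraph (LRVertexSet m k) :=
  SimpleGraph.fromRel
    (fun u v => (u.val.2 + 1) % (2 ^ m + 1) = v.val.2 % (2 ^ m + 1) ∨ u.val.2 = v.val.2)

section LRProofAux

open Finset Real Filter

/-- binary popcount -/
private def pc (n : ℕ) : ℕ := n.bitIndices.length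

lemma pc_two_mul (n : ℕ) : pc (2 * n) = pc n := by simp [pc]

lemma pc_two_mul_add_one (n : ℕ) : pc (2 * n + 1) = pc n + 1 := by simp [pc]

lemma pc_succ_le (a : ℕ) : pc (a + 1) ≤ pc a + 1 := by
  induction a using Nat.strong_induction_on with
  | _ a ih =>
    obtain ⟨b, rfl | rfl⟩ := Nat.even_or_odd' a
    · rw [show 2 * b + 1 = 2 * b + 1 from rfl, pc_two_mul_add_one, pc_two_mul]
    · have h : 2 * b + 1 + 1 = 2 * (b + 1) := by ring
      rw [h, pc_two_mul, pc_two_mul_add_one]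
      exact (ih b (by omega)).trans (by omega)
      
lemma pc_add_two_pow (t : ℕ) : ∀ a, pc (a + 2 ^ t) ≤ pc a + 1 := by
  induction t with
  | zero => simpa using pc_succ_le
  | succ t ih =>
    intro a
    obtain ⟨b, rfl | rfl⟩ := Nat.even_or_odd' a
    · have h : 2 * b + 2 ^ (t + 1) = 2 * (b + 2 ^ t) := by rw [pow_succ]; ring
      rw [h, pc_two_mul, pc_two_mul]
      exact ih b
    · have h : 2 * b + 1 + 2 ^ (t + 1) = 2 * (b + 2 ^ t) + 1 := by rw [pow_succ]; ring
      rw [h, pc_two_mul_add_one, pc_two_mul_add_one]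
      exact Nat.add_le_add_right (ih b) 1

lemma lset_bound (m : ℕ) : ∀ i, ∀ x ∈ Lset m i, x ≤ 2 ^ m ∧ pc x ≤ i
  | 0 => by simp [Lset]
  | 1 => by
    rintro x hx
    simp only [Lset, Set.mem_union, Set.mem_singleton_iff, Set.mem_setOf_eq] at hx
    obtain rfl | ⟨t, ht, rfl⟩ := hx
    · simp [pc]
    · exact ⟨Nat.pow_le_pow_right (by norm_num) ht, by simp [pc]⟩
  | (i + 2) => by
    rintro x hx
    simp only [Lset, Set.mem_union, Set.mem_singleton_iff, Set.mem_setOf_eq] at hx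
    obtain rfl | ⟨a, b, ⟨hab, hL⟩, t, ht, rfl⟩ := hx
    · simp [pc]
    · have ha : a ∈ Lset m (i + 1) := by
        have : a ∈ Lset m (i + 1) ∩ Set.Icc a b := by
          rw [hL]; exact Set.mem_insert a {b}
        exact this.1
      have hb : b ∈ Lset m (i + 1) := by
        have : b ∈ Lset m (i + 1) ∩ Set.Icc a b := by
          rw [hL]; exact Set.mem_insert_iff.mpr (Or.inr rfl)
        exact this.1
      obtain ⟨ha1, ha2⟩ := lset_bound m (i + 1) a ha
      obtain ⟨hb1, hb2⟩ := lset_bound m (i + 1) b hb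
      have h2t : 2 ^ t ≤ b - a := by
        calc 2 ^ t ≤ 2 ^ Nat.log 2 (b - a) := Nat.pow_le_pow_right (by norm_num) ht
        _ ≤ b - a := Nat.pow_log_le_self 2 (by omega)
      refine ⟨by omega, ?_⟩
      exact (pc_add_two_pow t a).trans (by omega)

lemma bitIndices_nodup (n : ℕ) : n.bitIndices.Nodup :=
  (Nat.bitIndices_sorted (n := n)).nodup

lemma card_pc_le (m k : ℕ) :
    ((Finset.Iic (2 ^ m)).filter (fun x => pc x ≤ k)).card
      ≤ ∑ j ∈ range (k + 1), (m + 1).choose j := by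
  classical
  have hinj : ∀ x ∈ (Finset.Iic (2 ^ m)).filter (fun x => pc x ≤ k),
      x.bitIndices.toFinset ∈ (range (k + 1)).biUnion
        (fun j => powersetCard j (range (m + 1))) := by
    intro x hx
    simp only [mem_filter, Finset.mem_Iic] at hx
    rw [Finset.mem_biUnion]
    refine ⟨pc x, by simp [Nat.lt_succ_iff, hx.2], ?_⟩
    rw [mem_powersetCard]
    constructor
    · intro a ha
      rw [List.mem_toFinset] at ha
      have h2 : 2 ^ a ≤ 2 ^ m := (Nat.two_pow_le_of_mem_bitIndices ha).trans hx.1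
      have : a ≤ m := (Nat.pow_le_pow_iff_right (by norm_num)).mp h2
      simp [Nat.lt_succ_iff, this]
    · rw [List.toFinset_card_of_nodup (bitIndices_nodup x)]; rfl
  calc ((Finset.Iic (2 ^ m)).filter (fun x => pc x ≤ k)).card
      ≤ ((range (k + 1)).biUnion (fun j => powersetCard j (range (m + 1)))).card := by
        apply Finset.card_le_card_of_injOn _ hinj
        intro x hx y hy hxy
        simp only at hxy
        have : (x.bitIndices.map (2 ^ ·)).sum = (y.bitIndices.map (2 ^ ·)).sum := by
          rw [← List.sum_toFinset _ (bitIndices_nodup x),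
            ← List.sum_toFinset _ (bitIndices_nodup y), hxy]
        simpa using this
    _ ≤ ∑ j ∈ range (k + 1), (powersetCard j (range (m + 1))).card :=
        Finset.card_biUnion_le
    _ = ∑ j ∈ range (k + 1), (m + 1).choose j := by
        simp [Finset.card_powersetCard]

def Bnd (m k : ℕ) : Finset (ℕ × ℕ) :=
  {0} ×ˢ Finset.Iic (2 ^ m) ∪ Finset.Icc 1 k ×ˢ ((Finset.Iic (2 ^ m)).filter (fun x => pc x ≤ k))

lemma lr_subset (m k : ℕ) : LRVertexSet m k ⊆ ↑(Bnd m k) := by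
  rintro ⟨i, t⟩ hv
  simp only [LRVertexSet, Set.mem_setOf_eq] at hv
  simp only [Bnd, coe_union, Set.mem_union, coe_product, Set.mem_prod, coe_filter,
    Finset.coe_singleton, Set.mem_singleton_iff, Finset.mem_coe, Finset.mem_Iic,
    Finset.mem_Icc, Set.mem_setOf_eq]
  obtain ⟨h1, h2⟩ | ⟨h1, h2, h3⟩ := hv
  · exact Or.inl ⟨h1, h2⟩
  · obtain ⟨hx1, hx2⟩ := lset_bound m i t h3
    exact Or.inr ⟨⟨h1, h2⟩, hx1, hx2.trans h2⟩

lemma lr_finite (m k : ℕ) : (LRVertexSet m k).Finite :=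
  Set.Finite.subset (Bnd m k).finite_toSet (lr_subset m k)

lemma lr_lower (m k : ℕ) : 2 ^ m + 1 ≤ (LRVertexSet m k).ncard := by
  have hsub : ↑({0} ×ˢ Finset.Iic (2 ^ m) : Finset (ℕ × ℕ)) ⊆ LRVertexSet m k := by
    rintro ⟨i, t⟩ hv
    simp only [coe_product, Set.mem_prod, Finset.coe_singleton, Set.mem_singleton_iff,
      Finset.mem_coe, Finset.mem_Iic] at hv
    exact Or.inl hv
  have := Set.ncard_le_ncard hsub (lr_finite m k)
  rwa [Set.ncard_coe_finset, Finset.card_product, Finset.card_singleton, one_mul,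
    Nat.card_Iic] at this

lemma lr_upper (m k : ℕ) :
    (LRVertexSet m k).ncard ≤ 2 ^ m + 1 + k * ∑ j ∈ range (k + 1), (m + 1).choose j := by
  have h1 : (LRVertexSet m k).ncard ≤ (Bnd m k).card := by
    have := Set.ncard_le_ncard (lr_subset m k) (Bnd m k).finite_toSet
    rwa [Set.ncard_coe_finset] at this
  refine h1.trans ?_
  refine (Finset.card_union_le _ _).trans ?_
  rw [Finset.card_product, Finset.card_product, Finset.card_singleton, one_mul,
    Nat.card_Iic, Nat.card_Icc]
  have h2 := card_pc_le m k
  have : k + 1 - 1 = k := by omega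
  rw [this]
  exact Nat.add_le_add le_rfl (Nat.mul_le_mul le_rfl h2)

lemma tail_bound (n k : ℕ) (hk : k ≤ n) {p : ℝ} (hp : 0 < p) (hp2 : p ≤ 1 / 2) :
    (∑ j ∈ range (k + 1), ((n.choose j : ℝ))) ≤ (p ^ k * (1 - p) ^ (n - k))⁻¹ := by
  have hq : (0:ℝ) < 1 - p := by linarith
  have hpq : p ≤ 1 - p := by linarith
  have hw : (0:ℝ) < p ^ k * (1 - p) ^ (n - k) := by positivity
  rw [← one_div, le_div_iff₀ hw]
  have step : ∀ j, j ≤ k → p ^ k * (1 - p) ^ (n - k) ≤ p ^ j * (1 - p) ^ (n - j) := by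
    intro j hj
    have e1 : p ^ k = p ^ j * p ^ (k - j) := by rw [← pow_add]; congr 1; omega
    have e2 : (1 - p) ^ (n - j) = (1 - p) ^ (k - j) * (1 - p) ^ (n - k) := by
      rw [← pow_add]; congr 1; omega
    rw [e1, e2]
    have : p ^ (k - j) ≤ (1 - p) ^ (k - j) := pow_le_pow_left₀ hp.le hpq _
    calc p ^ j * p ^ (k - j) * (1 - p) ^ (n - k)
        ≤ p ^ j * (1 - p) ^ (k - j) * (1 - p) ^ (n - k) := by
          apply mul_le_mul_of_nonneg_right _ (by positivity)
          exact mul_le_mul_of_nonneg_left this (by positivity)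
      _ = p ^ j * ((1 - p) ^ (k - j) * (1 - p) ^ (n - k)) := by ring
  calc (∑ j ∈ range (k + 1), ((n.choose j : ℝ))) * (p ^ k * (1 - p) ^ (n - k))
      = ∑ j ∈ range (k + 1), (n.choose j : ℝ) * (p ^ k * (1 - p) ^ (n - k)) := by
        rw [Finset.sum_mul]
    _ ≤ ∑ j ∈ range (k + 1), (n.choose j : ℝ) * (p ^ j * (1 - p) ^ (n - j)) := by
        refine Finset.sum_le_sum fun j hj => ?_
        exact mul_le_mul_of_nonneg_left (step j (by simpa [Nat.lt_succ_iff] using hj))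
          (by positivity)
    _ ≤ ∑ j ∈ range (n + 1), (n.choose j : ℝ) * (p ^ j * (1 - p) ^ (n - j)) := by
        refine Finset.sum_le_sum_of_subset_of_nonneg
          (Finset.range_subset_range.mpr (by omega)) fun j _ _ => by positivity
    _ = (p + (1 - p)) ^ n := by
        rw [add_pow]
        refine Finset.sum_congr rfl fun j hj => by ring
    _ = 1 := by norm_num

lemma entropy_ineq {a : ℝ} (h0 : 0 < a) (h2 : a < 1 / 2) :
    (1 / (1 - a)) * ((1 - a) / a) ^ (a : ℝ) < 2 := by
  have hb : (0:ℝ) < 1 - a := by linarith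
  set r : ℝ := (1 / (1 - a)) * ((1 - a) / a) ^ (a : ℝ) with hr
  have hr0 : 0 < r := mul_pos (by positivity) (rpow_pos_of_pos (by positivity) _)
  have hlogr : Real.log r = Real.binEntropy a := by
    rw [hr, Real.log_mul (by positivity) (rpow_pos_of_pos (by positivity) _).ne',
      Real.log_rpow (by positivity), Real.log_div hb.ne' h0.ne', Real.binEntropy,
      Real.log_inv, Real.log_inv, one_div, Real.log_inv]
    ring
  have h1 : Real.binEntropy a < Real.log 2 :=
    Real.binEntropy_lt_log_two.mpr (by intro h; rw [h] at h2; norm_num at h2)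
  calc r = Real.exp (Real.log r) := (Real.exp_log hr0).symm
    _ < Real.exp (Real.log 2) := Real.exp_lt_exp.mpr (by rw [hlogr]; exact h1)
    _ = 2 := Real.exp_log (by norm_num)


end LRProofAux

open Finset Real Filter in
theorem lr_vertex_count_asymptotic (δ : ℝ) (hδ : 0 < δ) :
    Filter.Tendsto
      (fun m : ℕ =>
        ((LRVertexSet m (Nat.floor (((m : ℝ) - 1) / (2 + δ)))).ncard : ℝ) / 2 ^ m)
      Filter.atTop (nhds 1) := by
  have h2δ : (0:ℝ) < 2 + δ := by linarith
  set a : ℝ := (2 + δ)⁻¹ with ha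
  have ha0 : 0 < a := by positivity
  have ha2 : a < 1 / 2 := by
    rw [ha]
    rw [inv_lt_comm₀ h2δ (by norm_num)]
    norm_num
    linarith
  have hb : (0:ℝ) < 1 - a := by linarith
  set r : ℝ := (1 / (1 - a)) * ((1 - a) / a) ^ (a : ℝ) with hr
  have hr0 : 0 < r := mul_pos (by positivity) (rpow_pos_of_pos (by positivity) _)
  have hr2 : r < 2 := entropy_ineq ha0 ha2
  -- the upper comparison function
  set g : ℕ → ℝ := fun m => 1 + (1 / 2 : ℝ) ^ m + r * ((m : ℝ) * (r / 2) ^ m) with hg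
  have hg1 : Tendsto g atTop (nhds 1) := by
    have t1 : Tendsto (fun m : ℕ => (1 / 2 : ℝ) ^ m) atTop (nhds 0) :=
      tendsto_pow_atTop_nhds_zero_of_lt_one (by norm_num) (by norm_num)
    have t2 : Tendsto (fun m : ℕ => (m : ℝ) * (r / 2) ^ m) atTop (nhds 0) :=
      tendsto_self_mul_const_pow_of_lt_one (by positivity) (by linarith)
    have key : Tendsto (fun m : ℕ => 1 + (1 / 2 : ℝ) ^ m + r * ((m : ℝ) * (r / 2) ^ m))
        atTop (nhds (1 + 0 + r * 0)) :=
      (tendsto_const_nhds.add t1).add (tendsto_const_nhds.mul t2)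
    rw [hg]
    simpa using key
  refine tendsto_of_tendsto_of_tendsto_of_le_of_le' (tendsto_const_nhds) hg1 ?_ ?_
  · -- lower bound: eventually 1 ≤ N/2^m
    filter_upwards [eventually_ge_atTop 1] with m hm
    rw [le_div_iff₀ (by positivity)]
    have := lr_lower m (Nat.floor (((m : ℝ) - 1) / (2 + δ)))
    have : (2:ℝ) ^ m + 1 ≤ ((LRVertexSet m (Nat.floor (((m : ℝ) - 1) / (2 + δ)))).ncard : ℝ) := by
      exact_mod_cast this
    linarith
  · -- upper bound
    filter_upwards [eventually_ge_atTop 1] with m hm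
    set k := Nat.floor (((m : ℝ) - 1) / (2 + δ)) with hk
    have hm1 : (1:ℝ) ≤ (m:ℝ) := by exact_mod_cast hm
    have hfl : (k : ℝ) ≤ ((m : ℝ) - 1) / (2 + δ) :=
      Nat.floor_le (div_nonneg (by linarith) h2δ.le)
    have hkm : (k:ℝ) ≤ (m:ℝ) := by
      refine hfl.trans ?_
      rw [div_le_iff₀ h2δ]
      nlinarith
    have hkm' : k ≤ m := by exact_mod_cast hkm
    have hkn : k ≤ m + 1 := hkm'.trans (by omega)
    -- tail bound
    have htail : (∑ j ∈ range (k + 1), (((m+1).choose j : ℝ))) ≤ r ^ (m + 1) := by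
      refine (tail_bound (m+1) k hkn ha0 ha2.le).trans ?_
      have e1 : (a ^ k * (1 - a) ^ (m + 1 - k))⁻¹
          = (1 / (1 - a)) ^ (m + 1) * ((1 - a) / a) ^ k := by
        have h1 : (1 / (1 - a)) ^ (m + 1) * ((1 - a) / a) ^ k
            * (a ^ k * (1 - a) ^ (m + 1 - k)) = 1 := by
          obtain ⟨d, hd⟩ : ∃ d, m + 1 = d + k := ⟨m + 1 - k, by omega⟩
          rw [hd, Nat.add_sub_cancel, pow_add, div_pow, div_pow, one_pow]
          have hb0 : (1 - a) ≠ 0 := hb.ne'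
          have ha0' : a ≠ 0 := ha0.ne'
          field_simp
          rw [one_pow, div_pow]
          field_simp
        exact (eq_inv_of_mul_eq_one_left h1).symm
      rw [e1]
      have e2 : ((1 - a) / a) ^ k ≤ (((1 - a) / a) ^ (a:ℝ)) ^ (m + 1) := by
        have hba1 : 1 ≤ (1 - a) / a := by rw [le_div_iff₀ ha0]; linarith
        have c1 : ((1 - a) / a) ^ k = ((1 - a) / a) ^ ((k : ℝ)) := by
          rw [Real.rpow_natCast]
        have c2 : (((1 - a) / a) ^ (a:ℝ)) ^ (m + 1) = ((1 - a) / a) ^ (a * (m + 1 : ℕ) : ℝ) := by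
          rw [← Real.rpow_natCast (((1 - a) / a) ^ (a:ℝ)) (m+1), ← Real.rpow_mul (by positivity)]
        rw [c1, c2]
        apply Real.rpow_le_rpow_of_exponent_le hba1
        push_cast
        refine hfl.trans ?_
        rw [ha, div_eq_mul_inv, mul_comm]
        have : (0:ℝ) < (2+δ)⁻¹ := ha0
        nlinarith [ha0]
      calc (1 / (1 - a)) ^ (m + 1) * ((1 - a) / a) ^ k
          ≤ (1 / (1 - a)) ^ (m + 1) * (((1 - a) / a) ^ (a:ℝ)) ^ (m + 1) := by
            exact mul_le_mul_of_nonneg_left e2 (by positivity)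
        _ = r ^ (m + 1) := by rw [← mul_pow]
    -- combine
    rw [div_le_iff₀ (by positivity : (0:ℝ) < (2:ℝ) ^ m)]
    have hup := lr_upper m k
    have hupR : ((LRVertexSet m k).ncard : ℝ) ≤ 2 ^ m + 1 + (k : ℝ) * ∑ j ∈ range (k + 1), (((m+1).choose j : ℝ)) := by
      exact_mod_cast hup
    have hsum0 : (0:ℝ) ≤ ∑ j ∈ range (k + 1), (((m+1).choose j : ℝ)) := by positivity
    have h3 : ((LRVertexSet m k).ncard : ℝ) ≤ 2 ^ m + 1 + (m : ℝ) * r ^ (m + 1) := by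
      refine hupR.trans ?_
      have : (k : ℝ) * ∑ j ∈ range (k + 1), (((m+1).choose j : ℝ)) ≤ (m:ℝ) * r ^ (m+1) :=
        mul_le_mul hkm htail hsum0 (by positivity)
      linarith
    refine h3.trans (le_of_eq ?_)
    rw [hg]
    have h2m : ((2:ℝ) ^ m) ≠ 0 := by positivity
    simp only [div_pow, one_pow]
    field_simp
    ring
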